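/- Let (X,d) be a connected locally compact metric space. Then for each x ∈ X, the isotropy group {g ∈ I(X,d) : g x = x} is compact in the pointwise convergence topology. -/
import Mathlib

open Function Set Metric Topology

section vdW

variable {X : Type*} [MetricSpace X]

/-- The orbit of `y` under surjective isometries fixing `x`. -/
def vdWOrb (x y : X) : Set X :=
  {z | ∃ g : X → X, Isometry g ∧ Surjective g ∧ g x = x ∧ g y = z}

lemma mem_vdWOrb_self (x y : X) : y ∈ vdWOrb x y :=
  ⟨id, isometry_id, surjective_id, rfl, rfl⟩

lemma vdWOrb_x (x : X) : vdWOrb x x = {x} := by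
  ext z
  constructor
  · rintro ⟨g, _, _, hgx, rfl⟩; exact hgx
  · rintro rfl; exact mem_vdWOrb_self _ _

/-- The "radius of compactness" function. -/
noncomputable def vdWRho (y : X) : ℝ :=
  sSup {r : ℝ | 0 ≤ r ∧ IsCompact (closedBall y r)}

lemma vdWRho_set_nonempty (y : X) :
    {r : ℝ | 0 ≤ r ∧ IsCompact (closedBall y r)}.Nonempty :=
  ⟨0, le_refl 0, by rw [closedBall_zero]; exact isCompact_singleton⟩

lemma vdWRho_set_bddAbove {x : X} {r0 : ℝ} (hr0 : ¬ IsCompact (closedBall x r0)) (y : X) :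
    BddAbove {r : ℝ | 0 ≤ r ∧ IsCompact (closedBall y r)} := by
  refine ⟨r0 + dist x y, fun s hs => ?_⟩
  by_contra hlt
  push_neg at hlt
  apply hr0
  refine hs.2.of_isClosed_subset Metric.isClosed_closedBall (fun w hw => ?_)
  have : dist w x ≤ r0 := hw
  calc dist w y ≤ dist w x + dist x y := dist_triangle w x y
    _ ≤ r0 + dist x y := by linarith
    _ ≤ s := hlt.le

variable {x : X} {r0 : ℝ}

lemma vdWRho_nonneg (hr0 : ¬ IsCompact (closedBall x r0)) (y : X) : 0 ≤ vdWRho y :=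
  le_csSup (vdWRho_set_bddAbove hr0 y)
    ⟨le_refl 0, by rw [closedBall_zero]; exact isCompact_singleton⟩

lemma vdWRho_le (hr0 : ¬ IsCompact (closedBall x r0)) {y : X} {r : ℝ} (h0 : 0 ≤ r)
    (hc : IsCompact (closedBall y r)) : r ≤ vdWRho y :=
  le_csSup (vdWRho_set_bddAbove hr0 y) ⟨h0, hc⟩

lemma vdWRho_compact {y : X} {r : ℝ} (hr : r < vdWRho y) : IsCompact (closedBall y r) := by
  rcases lt_or_ge r 0 with h | h
  · rw [closedBall_eq_empty.2 h]; exact isCompact_empty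
  · obtain ⟨s, hs, hrs⟩ := exists_lt_of_lt_csSup (vdWRho_set_nonempty y) hr
    exact hs.2.of_isClosed_subset Metric.isClosed_closedBall (closedBall_subset_closedBall hrs.le)

lemma vdWRho_pos [LocallyCompactSpace X] (hr0 : ¬ IsCompact (closedBall x r0)) (y : X) :
    0 < vdWRho y := by
  obtain ⟨K, hKc, hK⟩ := exists_compact_mem_nhds y
  obtain ⟨ε, hε, hball⟩ := Metric.mem_nhds_iff.1 hK
  have h1 : closedBall y (ε / 2) ⊆ K :=
    (closedBall_subset_ball (by linarith)).trans hball
  have := vdWRho_le hr0 (by linarith : (0:ℝ) ≤ ε / 2)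
    (hKc.of_isClosed_subset Metric.isClosed_closedBall h1)
  linarith

lemma vdWRho_lip (hr0 : ¬ IsCompact (closedBall x r0)) (y z : X) :
    vdWRho y ≤ vdWRho z + dist y z := by
  refine csSup_le (vdWRho_set_nonempty y) (fun s hs => ?_)
  rcases le_or_gt s (dist y z) with h | h
  · have := vdWRho_nonneg hr0 z; linarith
  · have hc : IsCompact (closedBall z (s - dist y z)) := by
      refine hs.2.of_isClosed_subset Metric.isClosed_closedBall (fun w hw => ?_)
      have : dist w z ≤ s - dist y z := hw
      calc dist w y ≤ dist w z + dist z y := dist_triangle w z y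
        _ ≤ s := by rw [dist_comm z y]; linarith
    have := vdWRho_le hr0 (by linarith : (0:ℝ) ≤ s - dist y z) hc
    linarith

lemma isometry_image_closedBall {g : X → X} (hg : Isometry g) (hs : Surjective g)
    (y : X) (r : ℝ) : g '' closedBall y r = closedBall (g y) r := by
  ext w
  constructor
  · rintro ⟨u, hu, rfl⟩
    simpa only [mem_closedBall, hg.dist_eq] using hu
  · intro hw
    obtain ⟨u, rfl⟩ := hs w
    exact ⟨u, by simpa only [mem_closedBall, hg.dist_eq] using hw, rfl⟩

lemma vdWRho_mono_isom (hr0 : ¬ IsCompact (closedBall x r0)) {g : X → X} (hg : Isometry g)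
    (hs : Surjective g) (y : X) : vdWRho y ≤ vdWRho (g y) := by
  refine csSup_le (vdWRho_set_nonempty y) (fun s hss => ?_)
  refine vdWRho_le hr0 hss.1 ?_
  rw [← isometry_image_closedBall hg hs]
  exact hss.2.image hg.continuous

lemma vdWRho_invariant (hr0 : ¬ IsCompact (closedBall x r0)) {g : X → X} (hg : Isometry g)
    (hs : Surjective g) (y : X) : vdWRho (g y) = vdWRho y := by
  refine le_antisymm ?_ (vdWRho_mono_isom hr0 hg hs y)
  have hb : Function.Bijective g := ⟨hg.injective, hs⟩
  set e := Equiv.ofBijective g hb with he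
  have hsymm_isom : Isometry e.symm := by
    intro a b
    have h2 := hg (e.symm a) (e.symm b)
    rw [show g (e.symm a) = a from e.apply_symm_apply a,
      show g (e.symm b) = b from e.apply_symm_apply b] at h2
    exact h2.symm
  have := vdWRho_mono_isom hr0 hsymm_isom e.symm.surjective (g y)
  rwa [show e.symm (g y) = y from e.symm_apply_apply y] at this

lemma vdWRho_ge_on_closure (hr0 : ¬ IsCompact (closedBall x r0)) {y : X} {k : X}
    (hk : k ∈ closure (vdWOrb x y)) : vdWRho y ≤ vdWRho k := by
  by_contra hlt
  push_neg at hlt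
  obtain ⟨p, hp, hd⟩ := Metric.mem_closure_iff.1 hk (vdWRho y - vdWRho k) (by linarith)
  obtain ⟨g, hg, hgs, -, rfl⟩ := hp
  have h1 : vdWRho (g y) = vdWRho y := vdWRho_invariant hr0 hg hgs y
  have h2 : vdWRho (g y) ≤ vdWRho k + dist (g y) k := vdWRho_lip hr0 (g y) k
  rw [dist_comm] at hd
  linarith

/-- Key step: precompactness of orbits propagates to nearby points. -/
lemma vdW_step [LocallyCompactSpace X] (hr0 : ¬ IsCompact (closedBall x r0)) {y z : X}
    (hy : IsCompact (closure (vdWOrb x y))) (hz : dist y z < vdWRho y / 4) :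
    IsCompact (closure (vdWOrb x z)) := by
  have hρ : 0 < vdWRho y := vdWRho_pos hr0 y
  set K := closure (vdWOrb x y) with hK
  -- finite subcover of K by balls of radius ρ y / 2
  obtain ⟨t, ht⟩ := hy.elim_finite_subcover (fun k : K => ball (k : X) (vdWRho y / 2))
    (fun _ => isOpen_ball) (fun k hk => mem_iUnion.2 ⟨⟨k, hk⟩, mem_ball_self (by linarith)⟩)
  have horb : vdWOrb x z ⊆ ⋃ k ∈ t, closedBall (k : X) (3 * vdWRho y / 4) := by
    rintro w ⟨g, hg, hgs, hgx, rfl⟩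
    have hgy : g y ∈ K := subset_closure ⟨g, hg, hgs, hgx, rfl⟩
    obtain ⟨k, hkt, hkb⟩ := mem_iUnion₂.1 (ht hgy)
    refine mem_iUnion₂.2 ⟨k, hkt, ?_⟩
    have h1 : dist (g z) (g y) = dist z y := hg.dist_eq z y
    have h2 : dist (g y) (k : X) < vdWRho y / 2 := hkb
    have : dist (g z) (k : X) ≤ dist (g z) (g y) + dist (g y) (k : X) := dist_triangle _ _ _
    rw [mem_closedBall]
    rw [dist_comm] at hz
    linarith
  have hcomp : IsCompact (⋃ k ∈ t, closedBall (k : X) (3 * vdWRho y / 4)) := by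
    refine t.finite_toSet.isCompact_biUnion (fun k _ => ?_)
    refine vdWRho_compact ?_
    have := vdWRho_ge_on_closure hr0 k.2
    linarith
  have hclosed : IsClosed (⋃ k ∈ t, closedBall (k : X) (3 * vdWRho y / 4)) :=
    t.finite_toSet.isClosed_biUnion (fun _ _ => Metric.isClosed_closedBall)
  exact hcomp.of_isClosed_subset isClosed_closure (closure_minimal horb hclosed)

lemma vdW_orb_precompact [LocallyCompactSpace X] [ConnectedSpace X] (x y : X) :
    IsCompact (closure (vdWOrb x y)) := by
  by_cases hp : ∀ r : ℝ, IsCompact (closedBall x r)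
  · refine (hp (dist y x)).of_isClosed_subset isClosed_closure
      (closure_minimal ?_ Metric.isClosed_closedBall)
    rintro w ⟨g, hg, hgs, hgx, rfl⟩
    rw [mem_closedBall]
    calc dist (g y) x = dist (g y) (g x) := by rw [hgx]
      _ = dist y x := hg.dist_eq y x
      _ ≤ dist y x := le_refl _
  · push_neg at hp
    obtain ⟨r0, hr0⟩ := hp
    set A := {u : X | IsCompact (closure (vdWOrb x u))} with hA
    have hopen : IsOpen A := by
      rw [Metric.isOpen_iff]
      intro u hu
      refine ⟨vdWRho u / 4, by have := vdWRho_pos hr0 u; linarith, fun z hz => ?_⟩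
      have hz' : dist z u < vdWRho u / 4 := hz
      exact vdW_step hr0 hu (by rw [dist_comm]; exact hz')
    have hclosed : IsClosed A := by
      refine isClosed_of_closure_subset (fun u hu => ?_)
      have hρ := vdWRho_pos hr0 u
      obtain ⟨z, hzA, hd⟩ := Metric.mem_closure_iff.1 hu (vdWRho u / 8) (by linarith)
      have hlip := vdWRho_lip hr0 u z
      have hzu : dist z u < vdWRho z / 4 := by rw [dist_comm]; linarith
      exact vdW_step hr0 hzA hzu
    have hx : x ∈ A := by
      show IsCompact (closure (vdWOrb x x))
      rw [vdWOrb_x, closure_singleton]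
      exact isCompact_singleton
    have hAu : A = univ := IsClopen.eq_univ ⟨hclosed, hopen⟩ ⟨x, hx⟩
    have : y ∈ A := hAu ▸ mem_univ y
    exact this

/-- An isometric self-map of a compact set is surjective on that set. -/
lemma isometry_surjOn_compact {C : Set X} (hC : IsCompact C) {f : X → X} (hf : Isometry f)
    (hm : MapsTo f C C) {z : X} (hz : z ∈ C) : z ∈ f '' C := by
  by_contra hnz
  have himg : IsCompact (f '' C) := hC.image hf.continuous
  have hncl : z ∉ closure (f '' C) := by rwa [himg.isClosed.closure_eq]
  obtain ⟨ε, hε, hball⟩ : ∃ ε > 0, ∀ w ∈ f '' C, ε ≤ dist z w := by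
    rw [Metric.mem_closure_iff] at hncl
    push_neg at hncl
    obtain ⟨ε, hε, h⟩ := hncl
    exact ⟨ε, hε, fun w hw => h w hw⟩
  have hfn : ∀ n, Isometry (f^[n]) := by
    intro n
    induction n with
    | zero => simpa using isometry_id
    | succ n ih => rw [Function.iterate_succ]; exact ih.comp hf
  have hiter : ∀ n, f^[n] z ∈ C := by
    intro n
    induction n with
    | zero => simpa
    | succ n ih => rw [Function.iterate_succ_apply']; exact hm ih
  have hsep : ∀ m n : ℕ, m < n → ε ≤ dist (f^[m] z) (f^[n] z) := by
    intro m n hmn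
    have h1 : f^[n] z = f^[m] (f^[n - m] z) := by
      rw [← Function.iterate_add_apply]
      congr 1
      omega
    rw [h1, (hfn m).dist_eq]
    apply hball
    have h2 : n - m = (n - m - 1) + 1 := by omega
    rw [h2, Function.iterate_succ_apply']
    exact ⟨_, hiter _, rfl⟩
  obtain ⟨t, htfin, hcov⟩ := (Metric.totallyBounded_iff.1 hC.totallyBounded) (ε / 2)
    (by linarith)
  haveI := htfin.to_subtype
  have hφ : ∀ n : ℕ, ∃ c : t, f^[n] z ∈ ball (c : X) (ε / 2) := by
    intro n
    obtain ⟨c, hct, hcb⟩ := mem_iUnion₂.1 (hcov (hiter n))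
    exact ⟨⟨c, hct⟩, hcb⟩
  choose φ hφ' using hφ
  obtain ⟨m, n, hmn, heq⟩ := Finite.exists_ne_map_eq_of_infinite φ
  rcases hmn.lt_or_gt with h | h
  · have h1 := hφ' m
    have h2 := hφ' n
    rw [heq] at h1
    have := hsep m n h
    have hd : dist (f^[m] z) (f^[n] z) ≤ dist (f^[m] z) (φ n : X) + dist (φ n : X) (f^[n] z) :=
      dist_triangle _ _ _
    rw [dist_comm (φ n : X) (f^[n] z)] at hd
    simp only [mem_ball] at h1 h2
    linarith
  · have h1 := hφ' m
    have h2 := hφ' n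
    rw [heq] at h1
    have := hsep n m h
    have hd : dist (f^[n] z) (f^[m] z) ≤ dist (f^[n] z) (φ n : X) + dist (φ n : X) (f^[m] z) :=
      dist_triangle _ _ _
    rw [dist_comm (φ n : X) (f^[m] z)] at hd
    simp only [mem_ball] at h1 h2
    linarith

end vdW

theorem stmt_10 {X : Type*} [MetricSpace X] [LocallyCompactSpace X]
    [ConnectedSpace X] (x : X) :
    IsCompact {g : {f : X → X // Isometry f ∧ Surjective f} | g.1 x = x} := by
  rw [Subtype.isCompact_iff]
  have himg : (Subtype.val '' {g : {f : X → X // Isometry f ∧ Surjective f} | g.1 x = x})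
      = {f : X → X | Isometry f ∧ Surjective f ∧ f x = x} := by
    ext f
    constructor
    · rintro ⟨⟨f, hf⟩, hfx, rfl⟩
      exact ⟨hf.1, hf.2, hfx⟩
    · rintro ⟨h1, h2, h3⟩
      exact ⟨⟨f, h1, h2⟩, h3, rfl⟩
  rw [himg]
  set S := {f : X → X | Isometry f ∧ Surjective f ∧ f x = x} with hS
  have hC : ∀ z : X, IsCompact (closure (vdWOrb x z)) := vdW_orb_precompact x
  have hsub : S ⊆ {f : X → X | ∀ z, f z ∈ closure (vdWOrb x z)} := by
    rintro f ⟨h1, h2, h3⟩ z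
    exact subset_closure ⟨f, h1, h2, h3, rfl⟩
  have hP : IsCompact {f : X → X | ∀ z, f z ∈ closure (vdWOrb x z)} :=
    isCompact_pi_infinite (fun z => hC z)
  refine hP.of_isClosed_subset ?_ hsub
  refine isClosed_of_closure_subset (fun f hf => ?_)
  have hfi : Isometry f := by
    rw [isometry_iff_dist_eq]
    intro a b
    have hcls : IsClosed {g : X → X | dist (g a) (g b) = dist a b} :=
      isClosed_eq ((continuous_apply a).dist (continuous_apply b)) continuous_const
    exact closure_minimal (fun g hg => hg.1.dist_eq a b) hcls hf
  have hfx : f x = x := by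
    have hcls : IsClosed {g : X → X | g x = x} :=
      isClosed_eq (continuous_apply x) continuous_const
    exact closure_minimal (fun g hg => hg.2.2) hcls hf
  have hfs : Surjective f := by
    intro z
    set C := closure (vdWOrb x z) with hCdef
    have hzC : z ∈ C := subset_closure (mem_vdWOrb_self x z)
    have hmaps0 : MapsTo f (vdWOrb x z) C := by
      rintro w ⟨g, hg, hgs, hgx, rfl⟩
      have h1 : f (g z) ∈ (fun h : X → X => h (g z)) '' closure S :=
        ⟨f, hf, rfl⟩
      have h2 : (fun h : X → X => h (g z)) '' closure S
          ⊆ closure ((fun h : X → X => h (g z)) '' S) :=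
        image_closure_subset_closure_image (continuous_apply (g z))
      have h3 : (fun h : X → X => h (g z)) '' S ⊆ vdWOrb x z := by
        rintro w' ⟨h, hh, rfl⟩
        exact ⟨h ∘ g, hh.1.comp hg, hh.2.1.comp hgs, by simp [hgx, hh.2.2], rfl⟩
      exact closure_mono h3 (h2 h1)
    have hmaps : MapsTo f C C := by
      intro w hw
      have h1 : f '' C ⊆ closure (f '' vdWOrb x z) :=
        image_closure_subset_closure_image hfi.continuous
      have h2 : closure (f '' vdWOrb x z) ⊆ closure C :=
        closure_mono (fun w' ⟨u, hu, he⟩ => he ▸ hmaps0 hu)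
      rw [closure_closure] at h2
      exact h2 (h1 ⟨w, hw, rfl⟩)
    obtain ⟨w, _, hw⟩ := isometry_surjOn_compact (hC z) hfi hmaps hzC
    exact ⟨w, hw⟩
  exact ⟨hfi, hfs, hfx⟩
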